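/- Suppose $u_\tau \in C^2(\bar\Omega)$ satisfies the regularized Jang equation $\mc(u_\tau) - \tr(k)(u_\tau) = \tau u_\tau$ on a compact manifold-with-boundary $\bar\Omega$ with $u_\tau = \phi$ on $\partial\Omega$, where $0 < \tau \le 1$. Then $\sup_\Omega \tau|u_\tau| \le \max\{3\|k\|_{C^0(\bar\Omega)},\ \tau\|\phi\|_{C^0(\partial\Omega)}\}$. -/

import Mathlib

noncomputable section
open scoped BigOperators

/-- Local coordinates on a chart of the 3-manifold. -/
abbrev E3 : Type := EuclideanSpace ℝ (Fin 3)

/-- Partial derivative in the `i`-th coordinate direction. -/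
def pd (i : Fin 3) (f : E3 → ℝ) (x : E3) : ℝ :=
  fderiv ℝ f x (EuclideanSpace.single i 1)

/-- The inverse metric `g^{ij}`. -/
def ginv (g : E3 → Matrix (Fin 3) (Fin 3) ℝ) (x : E3) : Matrix (Fin 3) (Fin 3) ℝ :=
  (g x)⁻¹

/-- Christoffel symbols `Γ^l_{ij}` of the metric `g`. -/
def christoffel (g : E3 → Matrix (Fin 3) (Fin 3) ℝ) (l i j : Fin 3) (x : E3) : ℝ :=
  (1 / 2) * ∑ m, ginv g x l m *
    (pd i (fun y => g y m j) x + pd j (fun y => g y m i) x - pd m (fun y => g y i j) x)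

/-- Covariant Hessian `D_iD_j u` of `u`. -/
def hess (g : E3 → Matrix (Fin 3) (Fin 3) ℝ) (u : E3 → ℝ) (i j : Fin 3) (x : E3) : ℝ :=
  pd i (fun y => pd j u y) x - ∑ l, christoffel g l i j x * pd l u x

/-- `|Du|² = g^{ij} ∂ᵢu ∂ⱼu`. -/
def gradSq (g : E3 → Matrix (Fin 3) (Fin 3) ℝ) (u : E3 → ℝ) (x : E3) : ℝ :=
  ∑ i, ∑ j, ginv g x i j * pd i u x * pd j u x

/-- The tensor `g^{ij} - uⁱuʲ/(1+|Du|²)` (inverse of the graph metric). -/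
def graphInv (g : E3 → Matrix (Fin 3) (Fin 3) ℝ) (u : E3 → ℝ) (x : E3) (i j : Fin 3) : ℝ :=
  ginv g x i j -
    (∑ a, ginv g x i a * pd a u x) * (∑ b, ginv g x j b * pd b u x) / (1 + gradSq g u x)

/-- Mean curvature `ℋ(u)` of the graph of `u` in `(M × ℝ, g + dt²)`. -/
def mc (g : E3 → Matrix (Fin 3) (Fin 3) ℝ) (u : E3 → ℝ) (x : E3) : ℝ :=
  ∑ i, ∑ j, graphInv g u x i j * hess g u i j x / Real.sqrt (1 + gradSq g u x)

/-- Trace of `k` over the tangent space of the graph of `u`. -/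
def trk (g k : E3 → Matrix (Fin 3) (Fin 3) ℝ) (u : E3 → ℝ) (x : E3) : ℝ :=
  ∑ i, ∑ j, graphInv g u x i j * k x i j

open scoped Topology

lemma second_deriv_test_max {f g' : ℝ → ℝ} {c ε : ℝ} (hε : 0 < ε)
    (hd : ∀ t ∈ Set.Ioo (-ε) ε, HasDerivAt f (g' t) t)
    (hd2 : HasDerivAt g' c 0)
    (hmax : IsLocalMax f 0) : c ≤ 0 := by
  by_contra hc
  push_neg at hc
  have g'0 : g' 0 = 0 := by
    have h1 := (hd 0 ⟨by linarith, hε⟩).deriv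
    rw [← h1]
    exact hmax.deriv_eq_zero
  have hslope : Filter.Tendsto (slope g' 0) (𝓝[≠] 0) (𝓝 c) :=
    hasDerivAt_iff_tendsto_slope.mp hd2
  have hev : ∀ᶠ t in 𝓝[≠] (0:ℝ), 0 < slope g' 0 t :=
    hslope.eventually (eventually_gt_nhds hc)
  rw [eventually_nhdsWithin_iff, Metric.eventually_nhds_iff] at hev
  obtain ⟨δ1, hδ1, h1⟩ := hev
  obtain ⟨δ2, hδ2, h2⟩ := Metric.eventually_nhds_iff.mp hmax
  set m : ℝ := min (min δ1 δ2) ε with hm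
  have hmpos : 0 < m := lt_min (lt_min hδ1 hδ2) hε
  set δ : ℝ := m / 2 with hδdef
  have hδpos : 0 < δ := by positivity
  have hδm : δ < m := half_lt_self hmpos
  have hδε : δ < ε := hδm.trans_le (min_le_right _ _)
  have hδ1' : δ < δ1 := hδm.trans_le ((min_le_left _ _).trans (min_le_left _ _))
  have hδ2' : δ < δ2 := hδm.trans_le ((min_le_left _ _).trans (min_le_right _ _))
  have hmono : StrictMonoOn f (Set.Icc 0 δ) := by
    apply strictMonoOn_of_deriv_pos (convex_Icc 0 δ)
    · intro t ht
      exact (hd t ⟨by linarith [ht.1], by linarith [ht.2]⟩).continuousAt.continuousWithinAt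
    · intro t ht
      rw [interior_Icc] at ht
      rw [(hd t ⟨by linarith [ht.1], by linarith [ht.2]⟩).deriv]
      have hdist : dist t 0 < δ1 := by
        rw [Real.dist_eq, sub_zero, abs_of_pos ht.1]; linarith [ht.2]
      have hs := h1 hdist ht.1.ne'
      have hgt : 0 < g' t / t := by
        have : slope g' 0 t = g' t / t := by
          rw [slope_def_field, g'0, sub_zero, sub_zero]
        rwa [this] at hs
      rcases div_pos_iff.mp hgt with ⟨h, _⟩ | ⟨_, h⟩
      · exact h
      · linarith [ht.1]
  have hlt : f 0 < f δ :=
    hmono (Set.left_mem_Icc.mpr hδpos.le) (Set.right_mem_Icc.mpr hδpos.le) hδpos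
  have hle : f δ ≤ f 0 := h2 (by rw [Real.dist_eq, sub_zero, abs_of_pos hδpos]; exact hδ2')
  linarith

open scoped MatrixOrder in
lemma mat_trace_le (G B : Matrix (Fin 3) (Fin 3) ℝ) (hG : G.PosDef) (c : ℝ)
    (hB : ∀ v : Fin 3 → ℝ, (∑ i, ∑ j, B i j * v i * v j) ≤ c * ∑ i, ∑ j, G i j * v i * v j) :
    (∑ i, ∑ j, G⁻¹ i j * B i j) ≤ 3 * c := by
  set S := CFC.sqrt G with hSdef
  have hS2 : S * S = G := CFC.sqrt_mul_sqrt_self G hG.posSemidef.nonneg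
  have hSh : S.IsHermitian := (Matrix.nonneg_iff_posSemidef.mp (CFC.sqrt_nonneg G)).1
  have hSsym : ∀ i j, S i j = S j i := by
    intro i j
    have := congrArg (fun M => M j i) hSh
    simpa [Matrix.conjTranspose_apply] using this
  have hdet : IsUnit S.det := by
    have h1 : S.det * S.det = G.det := by rw [← Matrix.det_mul, hS2]
    have h2 : (0:ℝ) < G.det := hG.det_pos
    have hne : S.det ≠ 0 := by
      intro h
      rw [h, mul_zero] at h1
      exact h2.ne' h1.symm
    exact hne.isUnit
  set T := S⁻¹ with hTdef
  have hTS : T * S = 1 := Matrix.nonsing_inv_mul S hdet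
  have hST : S * T = 1 := Matrix.mul_nonsing_inv S hdet
  have hst : S.transpose = S := by ext a b; exact hSsym b a
  have hTt : T.transpose = T := by rw [hTdef, Matrix.transpose_nonsing_inv, hst]
  have hTsym : ∀ i j, T i j = T j i := by
    intro i j
    conv_rhs => rw [← hTt]
    exact (Matrix.transpose_apply T j i).symm
  have hGinv : G⁻¹ = T * T := by rw [← hS2, Matrix.mul_inv_rev]
  have hTGT : T * G * T = 1 := by
    rw [← hS2, ← mul_assoc T S S, hTS, one_mul, hST]
  have key : (∑ i, ∑ j, G⁻¹ i j * B i j) = ∑ m, ∑ i, ∑ j, B i j * T i m * T j m := by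
    have h1 : ∀ i j : Fin 3, G⁻¹ i j * B i j = ∑ m, B i j * T i m * T j m := by
      intro i j
      rw [hGinv, Matrix.mul_apply, Finset.sum_mul]
      refine Finset.sum_congr rfl fun m _ => ?_
      rw [hTsym m j]; ring
    simp only [h1]
    calc (∑ i, ∑ j, ∑ m, B i j * T i m * T j m)
        = ∑ i, ∑ m, ∑ j, B i j * T i m * T j m :=
          Finset.sum_congr rfl fun i _ => Finset.sum_comm
      _ = ∑ m, ∑ i, ∑ j, B i j * T i m * T j m := Finset.sum_comm
  have hone : ∀ m : Fin 3, (∑ i, ∑ j, G i j * T i m * T j m) = 1 := by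
    intro m
    have h2 : (T * G * T) m m = ∑ j, ∑ i, T m i * G i j * T j m := by
      simp [Matrix.mul_apply, Finset.sum_mul]
    have h3 : (∑ i, ∑ j, G i j * T i m * T j m) = ∑ j, ∑ i, T m i * G i j * T j m := by
      rw [Finset.sum_comm]
      refine Finset.sum_congr rfl fun j _ => Finset.sum_congr rfl fun i _ => ?_
      rw [hTsym i m]; ring
    rw [h3, ← h2, hTGT, Matrix.one_apply_eq]
  rw [key]
  calc (∑ m : Fin 3, ∑ i, ∑ j, B i j * T i m * T j m)
      ≤ ∑ m : Fin 3, c * ∑ i, ∑ j, G i j * T i m * T j m :=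
        Finset.sum_le_sum fun m _ => hB fun p => T p m
    _ = 3 * c := by
        simp only [hone, mul_one, Finset.sum_const, Finset.card_univ, Fintype.card_fin,
          smul_eq_mul]
        norm_num

set_option maxHeartbeats 1000000 in

lemma crit_max (g k : E3 → Matrix (Fin 3) (Fin 3) ℝ)
    (hg : ∀ x, (g x).PosDef)
    (Ω : Set E3) (hΩo : IsOpen Ω)
    (u : E3 → ℝ) (hu : ContDiffOn ℝ 2 u (closure Ω))
    (x0 : E3) (hx0 : x0 ∈ Ω) (hmax : IsLocalMax u x0) (Ck : ℝ)
    (hk : ∀ v : Fin 3 → ℝ,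
      |∑ i, ∑ j, k x0 i j * v i * v j| ≤ Ck * ∑ i, ∑ j, g x0 i j * v i * v j) :
    mc g u x0 - trk g k u x0 ≤ 3 * Ck := by
  classical
  have huΩ : ContDiffOn ℝ 2 u Ω := hu.mono subset_closure
  have hca : ∀ y ∈ Ω, ContDiffAt ℝ 2 u y := fun y hy => huΩ.contDiffAt (hΩo.mem_nhds hy)
  have hdiff : ∀ y ∈ Ω, DifferentiableAt ℝ u y :=
    fun y hy => (hca y hy).differentiableAt two_ne_zero
  set F := fderiv ℝ u with hF
  have hF0 : F x0 = 0 := hmax.fderiv_eq_zero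
  have hFd : DifferentiableAt ℝ F x0 :=
    ((hca x0 hx0).fderiv_right (m := 1) (by norm_num)).differentiableAt one_ne_zero
  set A := fderiv ℝ F x0 with hA
  have hAd : HasFDerivAt F A x0 := hFd.hasFDerivAt
  obtain ⟨ε, hεpos, hball⟩ := Metric.isOpen_iff.mp hΩo x0 hx0
  -- directional second derivative nonpositive
  have hdir : ∀ v : E3, A v v ≤ 0 := by
    intro v
    set ε' : ℝ := ε / (‖v‖ + 1) with hε'
    have hε'pos : 0 < ε' := by positivity
    have hmem : ∀ t ∈ Set.Ioo (-ε') ε', x0 + t • v ∈ Ω := by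
      intro t ht
      apply hball
      rw [Metric.mem_ball, dist_eq_norm]
      have h1 : ‖x0 + t • v - x0‖ = |t| * ‖v‖ := by
        simp [norm_smul]
      rw [h1]
      have h2 : |t| < ε' := abs_lt.mpr ⟨ht.1, ht.2⟩
      calc |t| * ‖v‖ ≤ |t| * (‖v‖ + 1) := by nlinarith [abs_nonneg t, norm_nonneg v]
        _ < ε' * (‖v‖ + 1) := by nlinarith [norm_nonneg v]
        _ = ε := by rw [hε', div_mul_cancel₀]; positivity
    have hL : ∀ t : ℝ, HasDerivAt (fun s : ℝ => x0 + s • v) v t := by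
      intro t
      simpa using ((hasDerivAt_id t).smul_const v).const_add x0
    have hd : ∀ t ∈ Set.Ioo (-ε') ε',
        HasDerivAt (fun s => u (x0 + s • v)) (F (x0 + t • v) v) t := by
      intro t ht
      exact ((hdiff _ (hmem t ht)).hasFDerivAt).comp_hasDerivAt t (hL t)
    have h1 : HasFDerivAt (fun y => F y v)
        ((ContinuousLinearMap.apply ℝ ℝ v).comp A) x0 :=
      (ContinuousLinearMap.apply ℝ ℝ v).hasFDerivAt.comp x0 hAd
    have hd2 : HasDerivAt (fun t : ℝ => F (x0 + t • v) v) (A v v) 0 := by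
      have hx0eq : x0 + (0:ℝ) • v = x0 := by simp
      rw [← hx0eq] at h1
      have := h1.comp_hasDerivAt 0 (hL 0)
      exact this
    have hmaxf : IsLocalMax (fun t : ℝ => u (x0 + t • v)) 0 := by
      have hLt : Filter.Tendsto (fun t : ℝ => x0 + t • v) (𝓝 0) (𝓝 x0) := by
        have := (hL 0).continuousAt
        simpa using this.tendsto
      have hev := hLt.eventually hmax
      simpa [IsLocalMax, IsMaxFilter] using hev
    exact second_deriv_test_max hε'pos hd hd2 hmaxf
  -- pointwise facts at the critical point
  have hpd0 : ∀ l, pd l u x0 = 0 := by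
    intro l
    rw [pd, ← hF, hF0]
    simp
  have hpdpd : ∀ i j, pd i (fun y => pd j u y) x0
      = A (EuclideanSpace.single i 1) (EuclideanSpace.single j 1) := by
    intro i j
    have h1 : HasFDerivAt (fun y => F y (EuclideanSpace.single j 1))
        ((ContinuousLinearMap.apply ℝ ℝ (EuclideanSpace.single j 1)).comp A) x0 :=
      by exact (ContinuousLinearMap.apply ℝ ℝ (EuclideanSpace.single j 1)).hasFDerivAt.comp x0 hAd
    have h2 := h1.fderiv
    have h3 : (fun y => pd j u y) = fun y => F y (EuclideanSpace.single j 1) := by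
      funext y; rw [pd, hF]
    rw [pd, h3, h2]
    rfl
  have hgrad0 : gradSq g u x0 = 0 := by simp [gradSq, hpd0]
  have hmc : mc g u x0
      = ∑ i, ∑ j, ginv g x0 i j * A (EuclideanSpace.single i 1) (EuclideanSpace.single j 1) := by
    simp [mc, graphInv, hess, hgrad0, hpd0, hpdpd, Real.sqrt_one]
  have htrk : trk g k u x0 = ∑ i, ∑ j, ginv g x0 i j * k x0 i j := by
    simp [trk, graphInv, hgrad0, hpd0]
  -- quadratic form identity
  have hquad : ∀ v : Fin 3 → ℝ,
      (∑ i, ∑ j, A (EuclideanSpace.single i 1) (EuclideanSpace.single j 1) * v i * v j)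
        = A (∑ i, v i • EuclideanSpace.single i 1) (∑ j, v j • EuclideanSpace.single j 1) := by
    intro v
    simp only [map_sum, map_smul, ContinuousLinearMap.sum_apply,
      ContinuousLinearMap.smul_apply, ContinuousLinearMap.coe_sum', Finset.sum_apply,
      smul_eq_mul, Finset.mul_sum]
    rw [Finset.sum_comm]
    exact Finset.sum_congr rfl fun a _ => Finset.sum_congr rfl fun b _ => by ring
  -- mean curvature at max is nonpositive
  have hmcle : mc g u x0 ≤ 0 := by
    have hB : ∀ v : Fin 3 → ℝ,
        (∑ i, ∑ j,
          (Matrix.of fun i j => A (EuclideanSpace.single i 1) (EuclideanSpace.single j 1)) i j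
            * v i * v j)
          ≤ (0:ℝ) * ∑ i, ∑ j, g x0 i j * v i * v j := by
      intro v
      rw [zero_mul]
      simp only [Matrix.of_apply]
      rw [hquad v]
      exact hdir _
    have hres := mat_trace_le (g x0)
      (Matrix.of fun i j => A (EuclideanSpace.single i 1) (EuclideanSpace.single j 1))
      (hg x0) 0 hB
    rw [hmc]
    simpa [ginv] using hres
  -- trace of k bound
  have hktrk : -(trk g k u x0) ≤ 3 * Ck := by
    have hB : ∀ v : Fin 3 → ℝ,
        (∑ i, ∑ j, (-(k x0)) i j * v i * v j) ≤ Ck * ∑ i, ∑ j, g x0 i j * v i * v j := by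
      intro v
      have h1 : (∑ i, ∑ j, (-(k x0)) i j * v i * v j)
          = -(∑ i, ∑ j, k x0 i j * v i * v j) := by
        simp [Matrix.neg_apply, neg_mul, Finset.sum_neg_distrib]
      rw [h1]
      exact (neg_le_abs _).trans (hk v)
    have hres := mat_trace_le (g x0) (-(k x0)) (hg x0) Ck hB
    have h2 : (∑ i, ∑ j, (g x0)⁻¹ i j * (-(k x0)) i j)
        = -(∑ i, ∑ j, (g x0)⁻¹ i j * k x0 i j) := by
      simp [Matrix.neg_apply, mul_neg, Finset.sum_neg_distrib]
    rw [h2] at hres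
    rw [htrk]
    exact le_trans (by exact le_of_eq rfl) hres
  linarith

lemma pd_neg (f : E3 → ℝ) (i : Fin 3) (x : E3) :
    pd i (fun y => -(f y)) x = -(pd i f x) := by
  rw [pd, pd, fderiv_fun_neg]
  simp

lemma gradSq_neg (g : E3 → Matrix (Fin 3) (Fin 3) ℝ) (u : E3 → ℝ) (x : E3) :
    gradSq g (fun y => -(u y)) x = gradSq g u x := by
  simp only [gradSq, pd_neg, mul_neg, neg_mul, neg_neg]

lemma graphInv_neg (g : E3 → Matrix (Fin 3) (Fin 3) ℝ) (u : E3 → ℝ) (x : E3) (i j : Fin 3) :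
    graphInv g (fun y => -(u y)) x i j = graphInv g u x i j := by
  simp only [graphInv, gradSq_neg, pd_neg, mul_neg, Finset.sum_neg_distrib, neg_mul, neg_neg]

lemma hess_neg (g : E3 → Matrix (Fin 3) (Fin 3) ℝ) (u : E3 → ℝ) (i j : Fin 3) (x : E3) :
    hess g (fun y => -(u y)) i j x = -(hess g u i j x) := by
  have h : (fun y => pd j (fun z => -(u z)) y) = fun y => -(pd j u y) :=
    funext fun y => pd_neg u j y
  rw [hess, hess, h, pd_neg (fun y => pd j u y) i x]
  simp only [pd_neg, mul_neg, Finset.sum_neg_distrib]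
  ring

lemma mc_neg (g : E3 → Matrix (Fin 3) (Fin 3) ℝ) (u : E3 → ℝ) (x : E3) :
    mc g (fun y => -(u y)) x = -(mc g u x) := by
  simp only [mc, graphInv_neg, hess_neg, gradSq_neg, mul_neg, neg_div, Finset.sum_neg_distrib]

lemma trk_neg (g k : E3 → Matrix (Fin 3) (Fin 3) ℝ) (u : E3 → ℝ) (x : E3) :
    trk g (fun y => -(k y)) (fun y => -(u y)) x = -(trk g k u x) := by
  simp only [trk, graphInv_neg, Matrix.neg_apply, mul_neg, Finset.sum_neg_distrib]

lemma crit_min (g k : E3 → Matrix (Fin 3) (Fin 3) ℝ)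
    (hg : ∀ x, (g x).PosDef)
    (Ω : Set E3) (hΩo : IsOpen Ω)
    (u : E3 → ℝ) (hu : ContDiffOn ℝ 2 u (closure Ω))
    (x1 : E3) (hx1 : x1 ∈ Ω) (hmin : IsLocalMin u x1) (Ck : ℝ)
    (hk : ∀ v : Fin 3 → ℝ,
      |∑ i, ∑ j, k x1 i j * v i * v j| ≤ Ck * ∑ i, ∑ j, g x1 i j * v i * v j) :
    -(3 * Ck) ≤ mc g u x1 - trk g k u x1 := by
  have hk' : ∀ v : Fin 3 → ℝ,
      |∑ i, ∑ j, (fun y => -(k y)) x1 i j * v i * v j|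
        ≤ Ck * ∑ i, ∑ j, g x1 i j * v i * v j := by
    intro v
    have h1 : (∑ i, ∑ j, (-(k x1)) i j * v i * v j)
        = -(∑ i, ∑ j, k x1 i j * v i * v j) := by
      simp [Matrix.neg_apply, neg_mul, Finset.sum_neg_distrib]
    simpa [h1, abs_neg] using hk v
  have h := crit_max g (fun y => -(k y)) hg Ω hΩo (fun y => -(u y)) hu.neg x1 hx1
    hmin.neg Ck hk'
  rw [mc_neg, trk_neg] at h
  linarith

/-- Maximum-principle estimate for solutions of the regularized Jang equation
`ℋ(u_τ) - tr(k)(u_τ) = τ u_τ`, `u_τ = φ` on `∂Ω`: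
`sup_Ω τ|u_τ| ≤ max {3‖k‖_{C⁰(Ω̄)}, τ‖φ‖_{C⁰(∂Ω)}}`. -/
theorem stmt2 (g k : E3 → Matrix (Fin 3) (Fin 3) ℝ)
    (hg : ∀ x, (g x).PosDef) (hgsym : ∀ x, (g x).IsSymm)
    (hgC1 : ∀ i j, ContDiff ℝ 1 fun x => g x i j)
    (Ω : Set E3) (hΩo : IsOpen Ω) (hΩb : Bornology.IsBounded Ω)
    (u φ : E3 → ℝ) (τ Ck Cφ : ℝ) (hτ : 0 < τ) (hτ1 : τ ≤ 1)
    (hu : ContDiffOn ℝ 2 u (closure Ω)) (huc : ContinuousOn u (closure Ω))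
    (heq : ∀ x ∈ Ω, mc g u x - trk g k u x = τ * u x)
    (hbdry : ∀ x ∈ frontier Ω, u x = φ x)
    (hk : ∀ x ∈ closure Ω, ∀ v : Fin 3 → ℝ,
      |∑ i, ∑ j, k x i j * v i * v j| ≤ Ck * ∑ i, ∑ j, g x i j * v i * v j)
    (hφ : ∀ x ∈ frontier Ω, |φ x| ≤ Cφ) :
    ∀ x ∈ Ω, τ * |u x| ≤ max (3 * Ck) (τ * Cφ) := by
  intro x hx
  have hclne : (closure Ω).Nonempty := ⟨x, subset_closure hx⟩
  have hcomp : IsCompact (closure Ω) :=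
    Metric.isCompact_of_isClosed_isBounded isClosed_closure hΩb.closure
  obtain ⟨x0, hx0c, hmax⟩ := hcomp.exists_isMaxOn hclne huc
  obtain ⟨x1, hx1c, hmin⟩ := hcomp.exists_isMinOn hclne huc
  have hupper : τ * u x ≤ max (3 * Ck) (τ * Cφ) := by
    have hle : u x ≤ u x0 := hmax (subset_closure hx)
    by_cases h0 : x0 ∈ Ω
    · have hloc : IsLocalMax u x0 :=
        hmax.isLocalMax (Filter.mem_of_superset (hΩo.mem_nhds h0) subset_closure)
      have hcm := crit_max g k hg Ω hΩo u hu x0 h0 hloc Ck (hk x0 hx0c)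
      have heq0 := heq x0 h0
      have h1 : τ * u x0 ≤ 3 * Ck := by linarith
      have h2 : τ * u x ≤ τ * u x0 := mul_le_mul_of_nonneg_left hle hτ.le
      exact (h2.trans h1).trans (le_max_left _ _)
    · have hfr : x0 ∈ frontier Ω := by rw [hΩo.frontier_eq]; exact ⟨hx0c, h0⟩
      have hb := hbdry x0 hfr
      have h2 := hφ x0 hfr
      have h3 : u x0 ≤ Cφ := by rw [hb]; exact (le_abs_self _).trans h2
      calc τ * u x ≤ τ * u x0 := mul_le_mul_of_nonneg_left hle hτ.le
        _ ≤ τ * Cφ := mul_le_mul_of_nonneg_left h3 hτ.le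
        _ ≤ max (3 * Ck) (τ * Cφ) := le_max_right _ _
  have hlower : -(max (3 * Ck) (τ * Cφ)) ≤ τ * u x := by
    have hle : u x1 ≤ u x := hmin (subset_closure hx)
    by_cases h0 : x1 ∈ Ω
    · have hloc : IsLocalMin u x1 :=
        hmin.isLocalMin (Filter.mem_of_superset (hΩo.mem_nhds h0) subset_closure)
      have hcm := crit_min g k hg Ω hΩo u hu x1 h0 hloc Ck (hk x1 hx1c)
      have heq1 := heq x1 h0
      have h1 : -(3 * Ck) ≤ τ * u x1 := by linarith
      have h2 : τ * u x1 ≤ τ * u x := mul_le_mul_of_nonneg_left hle hτ.le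
      have h3 : -(max (3 * Ck) (τ * Cφ)) ≤ -(3 * Ck) :=
        neg_le_neg (le_max_left _ _)
      linarith
    · have hfr : x1 ∈ frontier Ω := by rw [hΩo.frontier_eq]; exact ⟨hx1c, h0⟩
      have hb := hbdry x1 hfr
      have h2 := hφ x1 hfr
      have h3 : -Cφ ≤ u x1 := by rw [hb]; exact neg_le_of_abs_le h2
      have h4 : τ * (-Cφ) ≤ τ * u x1 := mul_le_mul_of_nonneg_left h3 hτ.le
      have h5 : τ * u x1 ≤ τ * u x := mul_le_mul_of_nonneg_left hle hτ.le
      have h6 : -(max (3 * Ck) (τ * Cφ)) ≤ -(τ * Cφ) := neg_le_neg (le_max_right _ _)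
      have h7 : τ * (-Cφ) = -(τ * Cφ) := by ring
      linarith
  have habs : τ * |u x| = |τ * u x| := by rw [abs_mul, abs_of_pos hτ]
  rw [habs]
  exact abs_le.mpr ⟨hlower, hupper⟩
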